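/- For every fuzzy frame F = ⟨W,R⟩, the formula □p ↔ ¬ᵢ◇¬ᵢp is KGinv-valid on F if and only if F is crisp (i.e., R takes values only in {0,1}). -/

import Mathlib

noncomputable def Gimp (x y : ℝ) : ℝ := if x ≤ y then 1 else y

inductive Fml : Type
  | var : ℕ → Fml
  | inv : Fml → Fml
  | and : Fml → Fml → Fml
  | imp : Fml → Fml → Fml
  | box : Fml → Fml
  | dia : Fml → Fml
  deriving DecidableEq

noncomputable def Fml.eval {W : Type} (R : W → W → ℝ) (v : ℕ → W → ℝ) : Fml → W → ℝ
  | .var p, w => v p w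
  | .inv φ, w => 1 - Fml.eval R v φ w
  | .and φ χ, w => min (Fml.eval R v φ w) (Fml.eval R v χ w)
  | .imp φ χ, w => Gimp (Fml.eval R v φ w) (Fml.eval R v χ w)
  | .box φ, w => sInf (Set.range fun w' => Gimp (R w w') (Fml.eval R v φ w'))
  | .dia φ, w => sSup (Set.range fun w' => min (R w w') (Fml.eval R v φ w'))

def KGinvValid {W : Type} (R : W → W → ℝ) (φ : Fml) : Prop :=
  ∀ v : ℕ → W → ℝ, (∀ p w, v p w ∈ Set.Icc (0:ℝ) 1) → ∀ w : W, Fml.eval R v φ w = 1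

def Fml.biiff (φ χ : Fml) : Fml := .and (.imp φ χ) (.imp χ φ)

lemma Gimp_self (x : ℝ) : Gimp x x = 1 := if_pos le_rfl

lemma Gimp_of_le {x y : ℝ} (h : x ≤ y) : Gimp x y = 1 := if_pos h

lemma Gimp_crisp {r x : ℝ} (hr : r = 0 ∨ r = 1) (hx0 : 0 ≤ x) (hx1 : x ≤ 1) :
    Gimp r x = 1 - min r (1 - x) := by
  rcases hr with rfl | rfl
  · rw [Gimp_of_le hx0, min_eq_left (by linarith)]; ring
  · have hmin : min (1:ℝ) (1 - x) = 1 - x := min_eq_right (by linarith)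
    rw [hmin]
    unfold Gimp
    split_ifs with h
    · have : x = 1 := le_antisymm hx1 h
      rw [this]; ring
    · ring

/-- □p ↔ ¬ᵢ◇¬ᵢp is KGinv-valid on a fuzzy frame iff the frame is crisp. -/
theorem statement0 {W : Type} [Nonempty W] (R : W → W → ℝ)
    (hR : ∀ w w', R w w' ∈ Set.Icc (0:ℝ) 1) :
    KGinvValid R (Fml.biiff (.box (.var 0)) (.inv (.dia (.inv (.var 0))))) ↔
      ∀ w w', R w w' = 0 ∨ R w w' = 1 := by
  constructor
  · intro h w w'
    by_contra hc
    push_neg at hc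
    obtain ⟨hc0, hc1⟩ := hc
    set c := R w w' with hcdef
    have hc0' : 0 < c := lt_of_le_of_ne (hR w w').1 (Ne.symm hc0)
    have hc1' : c < 1 := lt_of_le_of_ne (hR w w').2 hc1
    classical
    set v : ℕ → W → ℝ := fun _ u => if u = w' then c else 1 with hv
    have hvIcc : ∀ p u, v p u ∈ Set.Icc (0:ℝ) 1 := by
      intro p u
      simp only [hv]
      split_ifs
      · exact ⟨le_of_lt hc0', le_of_lt hc1'⟩
      · exact ⟨zero_le_one, le_rfl⟩
    have hval := h v hvIcc w
    simp only [Fml.biiff, Fml.eval] at hval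
    -- compute box value
    have hA : (fun u => Gimp (R w u) (v 0 u)) = fun _ => (1:ℝ) := by
      funext u
      by_cases hu : u = w'
      · subst hu; simp only [hv, if_pos rfl]; exact Gimp_self _
      · simp only [hv, if_neg hu]; exact Gimp_of_le (hR w u).2
    have hAeq : sInf (Set.range fun u => Gimp (R w u) (v 0 u)) = 1 := by
      rw [hA, Set.range_const, csInf_singleton]
    -- compute dia value
    have hSup : sSup (Set.range fun u => min (R w u) (1 - v 0 u)) = min c (1 - c) := by
      apply le_antisymm
      · apply csSup_le (Set.range_nonempty _)
        rintro _ ⟨u, rfl⟩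
        by_cases hu : u = w'
        · subst hu; simp only [hv, if_pos rfl]; exact le_rfl
        · simp only [hv, if_neg hu, sub_self]
          have : min (R w u) 0 = 0 := min_eq_right (hR w u).1
          rw [this]
          exact le_min (le_of_lt hc0') (by linarith)
      · apply le_csSup
        · refine ⟨1, ?_⟩
          rintro _ ⟨u, rfl⟩
          exact le_trans (min_le_left _ _) (hR w u).2
        · exact ⟨w', by simp only [hv, if_pos rfl]; rfl⟩
    rw [hAeq, hSup] at hval
    have hBlt : 1 - min c (1 - c) < 1 := by
      have : 0 < min c (1 - c) := lt_min hc0' (by linarith)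
      linarith
    have hB0 : 0 ≤ 1 - min c (1 - c) := by
      have : min c (1 - c) ≤ c := min_le_left _ _
      linarith
    rw [Gimp_of_le (by linarith : (1:ℝ) - min c (1 - c) ≤ 1)] at hval
    have : Gimp 1 (1 - min c (1 - c)) = 1 - min c (1 - c) := if_neg (not_le.mpr hBlt)
    rw [this, min_eq_left (by linarith)] at hval
    linarith
  · intro hcrisp v hv w
    simp only [Fml.biiff, Fml.eval]
    set g : W → ℝ := fun u => min (R w u) (1 - v 0 u) with hg
    have hg01 : ∀ u, 0 ≤ g u ∧ g u ≤ 1 := by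
      intro u
      constructor
      · exact le_min (hR w u).1 (by linarith [(hv 0 u).2])
      · exact le_trans (min_le_left _ _) (hR w u).2
    have hf : (fun u => Gimp (R w u) (v 0 u)) = fun u => 1 - g u := by
      funext u
      exact Gimp_crisp (hcrisp w u) (hv 0 u).1 (hv 0 u).2
    have hbddA : BddAbove (Set.range g) := by
      refine ⟨1, ?_⟩; rintro _ ⟨u, rfl⟩; exact (hg01 u).2
    have hbddB : BddBelow (Set.range fun u => 1 - g u) := by
      refine ⟨0, ?_⟩; rintro _ ⟨u, rfl⟩; simp only; linarith [(hg01 u).2]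
    have key : sInf (Set.range fun u => 1 - g u) = 1 - sSup (Set.range g) := by
      apply le_antisymm
      · have h1 : sSup (Set.range g) ≤ 1 - sInf (Set.range fun u => 1 - g u) := by
          apply csSup_le (Set.range_nonempty _)
          rintro _ ⟨u, rfl⟩
          have := csInf_le hbddB (Set.mem_range_self u : (1 - g u) ∈ _)
          linarith
        linarith
      · apply le_csInf (Set.range_nonempty _)
        rintro _ ⟨u, rfl⟩
        have := le_csSup hbddA (Set.mem_range_self u : g u ∈ _)
        simp only
        linarith
    rw [hf, key, Gimp_self, min_self]
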